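/- Let m ≥ 1 and t ≥ 1 be integers and let P be a finite set of points in ℝ^m. Let H be the hypergraph with vertex set P whose hyperedges are the sets P ∩ h, where h ranges over all closed halfspaces {x ∈ ℝ^m : ⟨a,x⟩ ≤ b} (a ∈ ℝ^m, a ≠ 0, b ∈ ℝ). Then the t-VC-dimension of H is at most t·(m+1). -/

import Mathlib

/-- `T'` is `t`-realized by the hyperedge family `E` (a set of finsets) with respect to `T`. -/
def TRealizedSet {V : Type*} [DecidableEq V] (E : Set (Finset V)) (t : ℕ)
    (T T' : Finset V) : Prop :=
  ∃ W ⊆ T, W.card < t ∧ ∃ e ∈ E, T ∩ e = T' ∪ W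

/-- `T` is `t`-shattered by the hyperedge family `E`. -/
def TShatteredSet {V : Type*} [DecidableEq V] (E : Set (Finset V)) (t : ℕ)
    (T : Finset V) : Prop :=
  ∀ T' ⊆ T, TRealizedSet E t T T'

/-- The hyperedges induced on a finite point set `P ⊆ ℝ^m` by all closed halfspaces
`{x : ⟨a,x⟩ ≤ b}` with `a ≠ 0`. -/
def halfspaceEdges (m : ℕ) (P : Finset (Fin m → ℝ)) : Set (Finset {p : Fin m → ℝ // p ∈ P}) :=
  {s | ∃ (a : Fin m → ℝ) (b : ℝ), a ≠ 0 ∧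
    s = Finset.univ.filter (fun p : {p : Fin m → ℝ // p ∈ P} => ∑ i, a i * p.1 i ≤ b)}


open Finset
open scoped RealInnerProductSpace

section Geometry
variable {E : Type*} [NormedAddCommGroup E] [InnerProductSpace ℝ E]

lemma cc_descent {z w : E} (h : ⟪z, w - z⟫ < 0) :
    ∃ θ : ℝ, 0 < θ ∧ θ ≤ 1 ∧ ‖z + θ • (w - z)‖ < ‖z‖ := by
  have hwz : w - z ≠ 0 := by
    intro h0; rw [h0, inner_zero_right] at h; exact lt_irrefl 0 h
  have hn : (0:ℝ) < ‖w - z‖ ^ 2 := pow_pos (norm_pos_iff.2 hwz) 2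
  have hip : (0:ℝ) < -⟪z, w - z⟫ := by linarith
  set θ : ℝ := min 1 (-⟪z, w - z⟫ / ‖w - z‖ ^ 2) with hθdef
  have hθpos : 0 < θ := lt_min one_pos (div_pos hip hn)
  refine ⟨θ, hθpos, min_le_left _ _, ?_⟩
  have hA : θ * ‖w - z‖ ^ 2 ≤ -⟪z, w - z⟫ := by
    have := min_le_right 1 (-⟪z, w - z⟫ / ‖w - z‖ ^ 2)
    calc θ * ‖w - z‖ ^ 2 ≤ (-⟪z, w - z⟫ / ‖w - z‖ ^ 2) * ‖w - z‖ ^ 2 := by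
          exact mul_le_mul_of_nonneg_right this hn.le
      _ = -⟪z, w - z⟫ := by field_simp
  have hsq : ‖z + θ • (w - z)‖ ^ 2 < ‖z‖ ^ 2 := by
    rw [norm_add_sq_real, real_inner_smul_right, norm_smul, Real.norm_eq_abs,
      mul_pow, sq_abs]
    nlinarith [hθpos, h, hA]
  exact lt_of_pow_lt_pow_left₀ 2 (norm_nonneg _) hsq

lemma cc_min_inner {K : Set E} (hK : Convex ℝ K) {z : E} (hz : z ∈ K)
    (hmin : ∀ y ∈ K, ‖z‖ ≤ ‖y‖) {y : E} (hy : y ∈ K) : ‖z‖ ^ 2 ≤ ⟪z, y⟫ := by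
  by_contra hlt
  push_neg at hlt
  have h : ⟪z, y - z⟫ < 0 := by
    rw [inner_sub_right, real_inner_self_eq_norm_sq]; linarith
  obtain ⟨θ, hθ0, hθ1, hlt'⟩ := cc_descent h
  have hmem : z + θ • (y - z) ∈ K := by
    have h' := hK hz hy (by linarith : (0:ℝ) ≤ 1 - θ) hθ0.le (by ring)
    convert h' using 1
    simp only [smul_sub, sub_smul, one_smul]
    abel
  exact absurd (hmin _ hmem) (not_le.2 hlt')

lemma cc_card_le {ι : Type*} [Fintype ι] [FiniteDimensional ℝ E] {z : E} (hz : z ≠ 0)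
    {c : ℝ} {p : ι → E} (hp : AffineIndependent ℝ p) (hc : ∀ i, ⟪z, p i⟫ = c) :
    Fintype.card ι ≤ Module.finrank ℝ E := by
  rcases isEmpty_or_nonempty ι with h | h
  · simp [Fintype.card_eq_zero]
  · have hrank := hp.finrank_vectorSpan_add_one
    set f : E →ₗ[ℝ] ℝ := (innerSL ℝ z).toLinearMap with hf
    have hker : vectorSpan ℝ (Set.range p) ≤ LinearMap.ker f := by
      rw [vectorSpan_def]
      rw [Submodule.span_le]
      rintro v ⟨a, ⟨i, rfl⟩, b, ⟨i', rfl⟩, rfl⟩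
      simp only [SetLike.mem_coe, LinearMap.mem_ker, vsub_eq_sub, map_sub]
      simp only [hf, ContinuousLinearMap.coe_coe, innerSL_apply_apply, hc, sub_self]
    have hfsurj : LinearMap.range f = ⊤ := by
      rw [LinearMap.range_eq_top]
      intro r
      refine ⟨(r / ⟪z, z⟫) • z, ?_⟩
      have hzz : ⟪z, z⟫ ≠ 0 := inner_self_ne_zero.2 hz
      simp only [hf, ContinuousLinearMap.coe_coe, innerSL_apply_apply, real_inner_smul_right]
      field_simp
    have h1 : Module.finrank ℝ (vectorSpan ℝ (Set.range p)) ≤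
        Module.finrank ℝ (LinearMap.ker f) := Submodule.finrank_mono hker
    have h2 := LinearMap.finrank_range_add_finrank_ker f
    rw [hfsurj] at h2
    rw [finrank_top, Module.finrank_self] at h2
    omega

end Geometry

section Weights
variable {M : Type*} [AddCommGroup M] [Module ℝ M]

/-- Extract weights indexed by the original finite index type from convex hull membership. -/
lemma mem_convexHull_range_weights {ι : Type*} [Fintype ι] {g : ι → M} {x : M}
    (hx : x ∈ convexHull ℝ (Set.range g)) :
    ∃ lam : ι → ℝ, (∀ i, 0 ≤ lam i) ∧ ∑ i, lam i = 1 ∧ ∑ i, lam i • g i = x := by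
  classical
  rw [mem_convexHull_iff_exists_fintype] at hx
  obtain ⟨ι', _, w, zz, hw0, hw1, hzz, hsum⟩ := hx
  choose pre hpre using fun i => (hzz i : zz i ∈ Set.range g)
  refine ⟨fun j => ∑ i ∈ univ.filter (fun i => pre i = j), w i, ?_, ?_, ?_⟩
  · intro j; exact Finset.sum_nonneg fun i _ => hw0 i
  · rw [Finset.sum_fiberwise _ pre w]; exact hw1
  · calc ∑ j, (∑ i ∈ univ.filter (fun i => pre i = j), w i) • g j
        = ∑ j, ∑ i ∈ univ.filter (fun i => pre i = j), w i • zz i := by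
          refine Finset.sum_congr rfl fun j _ => ?_
          rw [Finset.sum_smul]
          refine Finset.sum_congr rfl fun i hi => ?_
          rw [← hpre i, (Finset.mem_filter.1 hi).2]
      _ = ∑ i, w i • zz i := Finset.sum_fiberwise _ pre _
      _ = x := hsum

end Weights

section CC
variable {E : Type*} [NormedAddCommGroup E] [InnerProductSpace ℝ E] [FiniteDimensional ℝ E]

/-- **Colorful Carathéodory theorem** -/
theorem colorful_caratheodory {n : ℕ} (hn : Module.finrank ℝ E + 1 = n) (C : Fin n → Finset E)
    (hC : ∀ i, (0:E) ∈ convexHull ℝ (C i : Set E)) :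
    ∃ f : Fin n → E, (∀ i, f i ∈ C i) ∧ (0:E) ∈ convexHull ℝ (Set.range f) := by
  classical
  have hCne : ∀ i, ∃ y, y ∈ C i := by
    intro i
    obtain ⟨y, hy⟩ := convexHull_nonempty_iff.1 ⟨0, hC i⟩
    exact ⟨y, hy⟩
  -- the type of transversals
  let F := ∀ i : Fin n, {x : E // x ∈ C i}
  have : Nonempty F := ⟨fun i => ⟨(hCne i).choose, (hCne i).choose_spec⟩⟩
  let G : F → Fin n → E := fun f i => (f i : E)
  let K : F → Set E := fun f => convexHull ℝ (Set.range (G f))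
  have hKcpt : ∀ f, IsCompact (K f) := fun f =>
    (Set.finite_range (G f)).isCompact_convexHull (𝕜 := ℝ)
  have hn0 : 0 < n := by omega
  haveI : Nonempty (Fin n) := ⟨⟨0, hn0⟩⟩
  have hKne : ∀ f, (K f).Nonempty := fun f =>
    convexHull_nonempty_iff.2 (Set.range_nonempty _)
  have hζ : ∀ f : F, ∃ z ∈ K f, ∀ y ∈ K f, ‖z‖ ≤ ‖y‖ := by
    intro f
    obtain ⟨z, hzK, hzmin⟩ := (hKcpt f).exists_isMinOn (hKne f) continuous_norm.continuousOn
    exact ⟨z, hzK, fun y hy => hzmin hy⟩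
  choose ζ hζK hζmin using hζ
  obtain ⟨f₀, hf₀⟩ := Finite.exists_min fun f => ‖ζ f‖
  set z := ζ f₀ with hzdef
  by_cases hz0 : z = 0
  · exact ⟨G f₀, fun i => (f₀ i).2, hz0 ▸ hζK f₀⟩
  exfalso
  have hd2 : (0:ℝ) < ‖z‖ ^ 2 := pow_pos (norm_pos_iff.2 hz0) 2
  have hge : ∀ y ∈ K f₀, ‖z‖ ^ 2 ≤ ⟪z, y⟫ :=
    fun y hy => cc_min_inner (convex_convexHull ℝ _) (hζK f₀) (hζmin f₀) hy
  -- Carathéodory extraction with positive weights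
  obtain ⟨ι₂, _, zz, ww, hrange, haff, hpos, hsum1, hsumz⟩ :=
    eq_pos_convex_span_of_mem_convexHull (hζK f₀)
  have hzzK : ∀ i, zz i ∈ K f₀ := fun i =>
    subset_convexHull ℝ _ (hrange (Set.mem_range_self i))
  -- all the points zz i lie on the hyperplane ⟪z, ·⟫ = ‖z‖^2
  have honplane : ∀ i, ⟪z, zz i⟫ = ‖z‖ ^ 2 := by
    have hsum0 : ∑ i, ww i * (⟪z, zz i⟫ - ‖z‖ ^ 2) = 0 := by
      have h1 : ∑ i, ww i * ⟪z, zz i⟫ = ‖z‖ ^ 2 := by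
        have : ⟪z, ∑ i, ww i • zz i⟫ = ‖z‖ ^ 2 := by
          rw [hsumz, real_inner_self_eq_norm_sq]
        rw [inner_sum] at this
        simpa only [real_inner_smul_right] using this
      have h2 : ∑ i, ww i * ‖z‖ ^ 2 = ‖z‖ ^ 2 := by
        rw [← Finset.sum_mul, hsum1, one_mul]
      simp only [mul_sub, Finset.sum_sub_distrib, h1, h2, sub_self]
    intro i
    have hterms : ∀ i ∈ Finset.univ, 0 ≤ ww i * (⟪z, zz i⟫ - ‖z‖ ^ 2) := fun i _ =>
      mul_nonneg (hpos i).le (by linarith [hge _ (hzzK i)])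
    have := (Finset.sum_eq_zero_iff_of_nonneg hterms).1 hsum0 i (Finset.mem_univ i)
    have h3 : ⟪z, zz i⟫ - ‖z‖ ^ 2 = 0 := by
      rcases mul_eq_zero.1 this with h | h
      · exact absurd h (hpos i).ne'
      · exact h
    linarith
  -- card bound
  have hcard : Fintype.card ι₂ ≤ Module.finrank ℝ E := cc_card_le hz0 haff honplane
  -- find a free color i₀
  choose pre hpre using fun i => (hrange (Set.mem_range_self i) : zz i ∈ Set.range (G f₀))
  have hfree : ∃ i₀ : Fin n, ∀ i, pre i ≠ i₀ := by
    by_contra hcon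
    push_neg at hcon
    have hsurj : Function.Surjective pre := fun i₀ => hcon i₀
    have := Fintype.card_le_of_surjective pre hsurj
    rw [Fintype.card_fin] at this
    omega
  obtain ⟨i₀, hi₀⟩ := hfree
  -- find a point of C i₀ on the far side
  have hp : ∃ p ∈ C i₀, ⟪z, p⟫ ≤ 0 := by
    by_contra hcon
    push_neg at hcon
    have hsub : (C i₀ : Set E) ⊆ {y | 0 < ⟪z, y⟫} := fun y hy => hcon y hy
    have hconv : Convex ℝ {y : E | 0 < ⟪z, y⟫} :=
      convex_halfSpace_gt ⟨fun a b => inner_add_right z a b,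
        fun c x => real_inner_smul_right z x c⟩ 0
    have h0 : (0:E) ∈ {y : E | 0 < ⟪z, y⟫} :=
      convexHull_min hsub hconv (hC i₀)
    simp only [Set.mem_setOf_eq, inner_zero_right, lt_irrefl] at h0
  obtain ⟨p, hpC, hpz⟩ := hp
  -- the improved transversal
  set f₁ : F := Function.update f₀ i₀ ⟨p, hpC⟩ with hf₁def
  have hG₁ : ∀ i, i ≠ i₀ → G f₁ i = G f₀ i := by
    intro i hi
    simp only [G, hf₁def, Function.update_of_ne hi]
  have hzK₁ : z ∈ K f₁ := by
    rw [hzdef, ← hsumz]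
    apply mem_convexHull_of_exists_fintype ww zz (fun i => (hpos i).le) hsum1 _ rfl
    intro i
    refine ⟨pre i, ?_⟩
    rw [hG₁ (pre i) (hi₀ i), hpre i]
  have hpK₁ : p ∈ K f₁ := by
    apply subset_convexHull ℝ _
    refine ⟨i₀, ?_⟩
    simp only [G, hf₁def, Function.update_self]
  have hinner : ⟪z, p - z⟫ < 0 := by
    rw [inner_sub_right, real_inner_self_eq_norm_sq]
    linarith
  obtain ⟨θ, hθ0, hθ1, hlt⟩ := cc_descent hinner
  have hmem : z + θ • (p - z) ∈ K f₁ := by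
    have h' := (convex_convexHull ℝ _) hzK₁ hpK₁ (by linarith : (0:ℝ) ≤ 1 - θ) hθ0.le (by ring)
    convert h' using 1
    simp only [smul_sub, sub_smul, one_smul]
    abel
  have : ‖ζ f₁‖ < ‖ζ f₀‖ := lt_of_le_of_lt (hζmin f₁ _ hmem) hlt
  exact absurd (hf₀ f₁) (not_le.2 this)

end CC

section Tverberg

/-- **Tverberg's theorem**, partition version with explicit convex coefficients. -/
theorem tverberg_partition (m t : ℕ) (ht : 1 ≤ t) (x : Fin (t*(m+1)+1) → (Fin m → ℝ)) :
    ∃ (j : Fin (t*(m+1)+1) → Fin (t+1)) (c : Fin (t*(m+1)+1) → ℝ) (y : Fin m → ℝ),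
      (∀ i, 0 ≤ c i) ∧ ∀ p : Fin (t+1),
        (∑ i ∈ Finset.univ.filter (fun i => j i = p), c i) = 1 ∧
        (∑ i ∈ Finset.univ.filter (fun i => j i = p), c i • x i) = y := by
  classical
  set L := WithLp.linearEquiv 2 ℝ (Fin t × Fin (m+1) → ℝ) with hLdef
  set u : Fin (t+1) → Fin t → ℝ :=
    fun p k => (if (p:ℕ) = (k:ℕ) then 1 else 0) + (if (p:ℕ) = t then -1 else 0) with hudef
  have hsum_ite : ∀ (c : Fin (t+1)) (F : Fin (t+1) → ℝ),
      ∑ p : Fin (t+1), (if p.val = c.val then F p else 0) = F c := by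
    intro c F
    rw [Finset.sum_eq_single c]
    · simp
    · intro p _ hne
      rw [if_neg (fun h => hne (Fin.ext h))]
    · intro h; exact absurd (Finset.mem_univ c) h
  have husum : ∀ (F : Fin (t+1) → ℝ) (k : Fin t),
      ∑ p, u p k * F p = F (Fin.castSucc k) - F (Fin.last t) := by
    intro F k
    have hterm : ∀ p : Fin (t+1), u p k * F p =
        (if (p:ℕ) = ((Fin.castSucc k : Fin (t+1)):ℕ) then F p else 0)
          + (if (p:ℕ) = ((Fin.last t : Fin (t+1)):ℕ) then (-F) p else 0) := by
      intro p
      simp only [hudef, Fin.coe_castSucc, Fin.val_last, Pi.neg_apply]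
      split_ifs <;> ring
    rw [Finset.sum_congr rfl (fun p _ => hterm p), Finset.sum_add_distrib,
      hsum_ite, hsum_ite]
    simp only [Pi.neg_apply]
    ring
  set v : Fin (t*(m+1)+1) → Fin (m+1) → ℝ := fun i => Fin.snoc (x i) 1 with hvdef
  set w : Fin (t*(m+1)+1) → Fin (t+1) → EuclideanSpace ℝ (Fin t × Fin (m+1)) :=
    fun i p => L.symm (fun kl => u p kl.1 * v i kl.2) with hwdef
  set C : Fin (t*(m+1)+1) → Finset (EuclideanSpace ℝ (Fin t × Fin (m+1))) := fun i => Finset.image (w i) Finset.univ with hCdef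
  have hLw : ∀ i p, L (w i p) = fun kl => u p kl.1 * v i kl.2 := by
    intro i p
    rw [hwdef]
    exact L.apply_symm_apply _
  have hC0 : ∀ i, (0:EuclideanSpace ℝ (Fin t × Fin (m+1))) ∈ convexHull ℝ (C i : Set (EuclideanSpace ℝ (Fin t × Fin (m+1)))) := by
    intro i
    have hsumw : ∑ p, w i p = 0 := by
      have h0 : (∑ p, fun kl : Fin t × Fin (m+1) => u p kl.1 * v i kl.2)
          = (0 : Fin t × Fin (m+1) → ℝ) := by
        funext kl
        rw [Finset.sum_apply]
        simpa using husum (fun _ => v i kl.2) kl.1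
      have := congrArg L.symm h0
      rw [map_zero] at this
      rw [← this, map_sum]
    apply mem_convexHull_of_exists_fintype (fun _ : Fin (t+1) => ((t:ℝ)+1)⁻¹) (w i)
    · intro p; positivity
    · rw [Finset.sum_const, Finset.card_univ, Fintype.card_fin]
      rw [nsmul_eq_mul]
      push_cast
      rw [mul_inv_cancel₀ (by positivity : ((t:ℝ)+1) ≠ 0)]
    · intro p; exact Finset.mem_coe.2 (Finset.mem_image_of_mem _ (Finset.mem_univ p))
    · rw [← Finset.smul_sum, hsumw, smul_zero]
  have hrank : Module.finrank ℝ (EuclideanSpace ℝ (Fin t × Fin (m+1))) + 1 = t*(m+1)+1 := by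
    rw [finrank_euclideanSpace]
    simp
  obtain ⟨f, hfC, hf0⟩ := colorful_caratheodory hrank C hC0
  have hjex : ∀ i, ∃ p, w i p = f i := by
    intro i
    obtain ⟨p, _, hp⟩ := Finset.mem_image.1 (hfC i)
    exact ⟨p, hp⟩
  choose j hj using hjex
  obtain ⟨lam, hlam0, hlam1, hlamsum⟩ := mem_convexHull_range_weights hf0
  have key : ∀ (k : Fin t) (l : Fin (m+1)), ∑ i, lam i * (u (j i) k * v i l) = 0 := by
    intro k l
    have h1 := congrArg L hlamsum
    rw [map_sum, map_zero] at h1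
    have h2 : ∀ i, L (lam i • f i) = lam i • (fun kl : Fin t × Fin (m+1) =>
        u (j i) kl.1 * v i kl.2) := by
      intro i
      rw [map_smul, ← hj i, hLw]
    rw [Finset.sum_congr rfl (fun i _ => h2 i)] at h1
    have h3 := congrFun h1 (k, l)
    rw [Finset.sum_apply] at h3
    simpa using h3
  set S : Fin (t+1) → Finset (Fin (t*(m+1)+1)) :=
    fun p => Finset.univ.filter (fun i => j i = p) with hSdef
  set σ : Fin (t+1) → Fin (m+1) → ℝ := fun p l => ∑ i ∈ S p, lam i * v i l with hσdef
  have hgroup : ∀ (k : Fin t) (l : Fin (m+1)), ∑ p, u p k * σ p l = 0 := by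
    intro k l
    have hfib : ∑ p, ∑ i ∈ S p, lam i * (u (j i) k * v i l) = 0 := by
      rw [hSdef]
      rw [Finset.sum_fiberwise _ j _]
      exact key k l
    rw [← hfib]
    refine Finset.sum_congr rfl fun p _ => ?_
    rw [hσdef, Finset.mul_sum]
    refine Finset.sum_congr rfl fun i hi => ?_
    have hji : j i = p := by
      rw [hSdef] at hi
      exact (Finset.mem_filter.1 hi).2
    rw [hji]
    ring
  have hσeq : ∀ (p : Fin (t+1)) (l : Fin (m+1)), σ p l = σ (Fin.last t) l := by
    intro p l
    rcases Fin.eq_castSucc_or_eq_last p with ⟨k, rfl⟩ | rfl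
    · have := husum (fun q => σ q l) k
      rw [hgroup k l] at this
      linarith [this]
    · rfl
  have hvlast : ∀ i, v i (Fin.last m) = 1 := by
    intro i
    rw [hvdef]
    exact Fin.snoc_last _ _
  have hμ : ∀ p, ∑ i ∈ S p, lam i = σ p (Fin.last m) := by
    intro p
    rw [hσdef]
    refine Finset.sum_congr rfl fun i _ => ?_
    rw [hvlast i, mul_one]
  have hμsum : ∑ p, σ p (Fin.last m) = 1 := by
    have h1 : ∑ p, ∑ i ∈ Finset.univ.filter (fun i => j i = p), lam i = 1 := by
      rw [Finset.sum_fiberwise _ j lam]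
      exact hlam1
    rw [← h1]
    exact Finset.sum_congr rfl fun p _ => (hμ p).symm
  have hμval : ((t:ℝ)+1) * σ (Fin.last t) (Fin.last m) = 1 := by
    have : ∑ p : Fin (t+1), σ (Fin.last t) (Fin.last m) = 1 := by
      rw [← hμsum]
      exact Finset.sum_congr rfl fun p _ => (hσeq p _).symm
    rw [Finset.sum_const, Finset.card_univ, Fintype.card_fin, nsmul_eq_mul] at this
    push_cast at this
    linarith
  refine ⟨j, fun i => ((t:ℝ)+1) * lam i, fun l => ((t:ℝ)+1) * σ (Fin.last t) (Fin.castSucc l),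
    fun i => mul_nonneg (by positivity) (hlam0 i), fun p => ⟨?_, ?_⟩⟩
  · show ∑ i ∈ S p, ((t:ℝ)+1) * lam i = 1
    rw [← Finset.mul_sum, hμ p, hσeq p]
    exact hμval
  · show ∑ i ∈ S p, (((t:ℝ)+1) * lam i) • x i
        = fun l => ((t:ℝ)+1) * σ (Fin.last t) (Fin.castSucc l)
    funext l
    rw [Finset.sum_apply]
    have : ∀ i ∈ S p, ((((t:ℝ)+1) * lam i) • x i) l = ((t:ℝ)+1) * (lam i * v i (Fin.castSucc l)) := by
      intro i _
      have hv : v i (Fin.castSucc l) = x i l := by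
        rw [hvdef]
        exact Fin.snoc_castSucc _ _ _
      rw [Pi.smul_apply, smul_eq_mul, hv]
      ring
    rw [Finset.sum_congr rfl this, ← Finset.mul_sum]
    exact congrArg (fun r => ((t:ℝ)+1) * r) (hσeq p (Fin.castSucc l))

end Tverberg

theorem t_vc_dim_halfspaces_le (m t : ℕ) (hm : 1 ≤ m) (ht : 1 ≤ t)
    (P : Finset (Fin m → ℝ)) (T : Finset {p : Fin m → ℝ // p ∈ P})
    (hT : TShatteredSet (halfspaceEdges m P) t T) :
    T.card ≤ t * (m + 1) := by
  classical
  by_contra hcon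
  push_neg at hcon
  obtain ⟨T₀, hT₀T, hT₀card⟩ :=
    Finset.exists_subset_card_eq (show t*(m+1)+1 ≤ T.card from hcon)
  set eqv := T₀.equivFinOfCardEq hT₀card with heqvdef
  set g : Fin (t*(m+1)+1) → {p : Fin m → ℝ // p ∈ P} := fun i => (eqv.symm i : _) with hgdef
  have hginj : Function.Injective g := fun i i' h => by
    have := Subtype.val_injective h
    exact eqv.symm.injective this
  have hgT : ∀ i, g i ∈ T := fun i => hT₀T (eqv.symm i).2
  obtain ⟨j, c, y, hc0, hpart⟩ := tverberg_partition m t ht (fun i => (g i).1)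
  set T' : Finset {p : Fin m → ℝ // p ∈ P} :=
    (Finset.univ.filter (fun i => j i = 0)).image g with hT'def
  have hT'T : T' ⊆ T := by
    intro q hq
    obtain ⟨i, _, rfl⟩ := Finset.mem_image.1 hq
    exact hgT i
  obtain ⟨W, hWT, hWcard, ed, hed, heq⟩ := hT T' hT'T
  obtain ⟨a, b, ha0, hedeq⟩ := hed
  -- the linear functional computation
  have hlin : ∀ (s : Finset (Fin (t*(m+1)+1))),
      ∑ l, a l * (∑ i ∈ s, c i • (g i).1) l = ∑ i ∈ s, c i * (∑ l, a l * (g i).1 l) := by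
    intro s
    have h1 : ∀ l, (∑ i ∈ s, c i • (g i).1) l = ∑ i ∈ s, c i * (g i).1 l := by
      intro l
      rw [Finset.sum_apply]
      exact Finset.sum_congr rfl fun i _ => rfl
    calc ∑ l, a l * (∑ i ∈ s, c i • (g i).1) l
        = ∑ l, ∑ i ∈ s, a l * (c i * (g i).1 l) := by
          refine Finset.sum_congr rfl fun l _ => ?_
          rw [h1 l, Finset.mul_sum]
      _ = ∑ i ∈ s, ∑ l, a l * (c i * (g i).1 l) := Finset.sum_comm
      _ = ∑ i ∈ s, c i * (∑ l, a l * (g i).1 l) := by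
          refine Finset.sum_congr rfl fun i _ => ?_
          rw [Finset.mul_sum]
          exact Finset.sum_congr rfl fun l _ => by ring
  -- members of part 0 are inside the halfspace
  have hA : ∀ i, j i = 0 → ∑ l, a l * (g i).1 l ≤ b := by
    intro i hji
    have hgi : g i ∈ T' := Finset.mem_image_of_mem g
      (Finset.mem_filter.2 ⟨Finset.mem_univ i, hji⟩)
    have : g i ∈ T ∩ ed := by
      rw [heq]
      exact Finset.mem_union_left _ hgi
    rw [hedeq] at this
    have := Finset.mem_filter.1 (Finset.mem_inter.1 this).2
    exact this.2
  -- hence the Tverberg point is in the halfspace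
  have hy : ∑ l, a l * y l ≤ b := by
    have h2 := (hpart 0).2
    have h1 := (hpart 0).1
    calc ∑ l, a l * y l
        = ∑ l, a l * (∑ i ∈ Finset.univ.filter (fun i => j i = 0), c i • (g i).1) l := by
          rw [h2]
      _ = ∑ i ∈ Finset.univ.filter (fun i => j i = 0), c i * (∑ l, a l * (g i).1 l) :=
          hlin _
      _ ≤ ∑ i ∈ Finset.univ.filter (fun i => j i = 0), c i * b := by
          refine Finset.sum_le_sum fun i hi => ?_
          exact mul_le_mul_of_nonneg_left (hA i (Finset.mem_filter.1 hi).2) (hc0 i)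
      _ = b := by rw [← Finset.sum_mul, h1, one_mul]
  -- every other part has a member inside the halfspace, which must lie in W
  have hC : ∀ p : Fin (t+1), ∃ i, p ≠ 0 → (j i = p ∧ g i ∈ W) := by
    intro p
    by_cases hp : p = 0
    · exact ⟨0, fun h => absurd hp h⟩
    · have hex : ∃ i, j i = p ∧ ∑ l, a l * (g i).1 l ≤ b := by
        by_contra hnone
        push_neg at hnone
        have h1 := (hpart p).1
        have h2 := (hpart p).2
        have hcex : ∃ i ∈ Finset.univ.filter (fun i => j i = p), 0 < c i := by
          by_contra hc
          push_neg at hc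
          have : ∑ i ∈ Finset.univ.filter (fun i => j i = p), c i = 0 :=
            Finset.sum_eq_zero fun i hi => le_antisymm (hc i hi) (hc0 i)
          rw [h1] at this
          exact one_ne_zero this
        obtain ⟨i₁, hi₁mem, hi₁pos⟩ := hcex
        have hpos : 0 < ∑ i ∈ Finset.univ.filter (fun i => j i = p),
            c i * ((∑ l, a l * (g i).1 l) - b) := by
          refine Finset.sum_pos' (fun i hi => ?_) ⟨i₁, hi₁mem, ?_⟩
          · have := hnone i (Finset.mem_filter.1 hi).2
            exact mul_nonneg (hc0 i) (by linarith)
          · have := hnone i₁ (Finset.mem_filter.1 hi₁mem).2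
            exact mul_pos hi₁pos (by linarith)
        have hexp : ∑ i ∈ Finset.univ.filter (fun i => j i = p),
            c i * ((∑ l, a l * (g i).1 l) - b) = (∑ l, a l * y l) - b := by
          have := hlin (Finset.univ.filter (fun i => j i = p))
          rw [h2] at this
          calc ∑ i ∈ Finset.univ.filter (fun i => j i = p),
              c i * ((∑ l, a l * (g i).1 l) - b)
              = (∑ i ∈ Finset.univ.filter (fun i => j i = p),
                  c i * (∑ l, a l * (g i).1 l))
                - (∑ i ∈ Finset.univ.filter (fun i => j i = p), c i) * b := by
                rw [Finset.sum_mul, ← Finset.sum_sub_distrib]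
                exact Finset.sum_congr rfl fun i _ => by ring
            _ = (∑ l, a l * y l) - b := by rw [← this, h1, one_mul]
        rw [hexp] at hpos
        linarith
      obtain ⟨i, hji, hib⟩ := hex
      refine ⟨i, fun _ => ⟨hji, ?_⟩⟩
      have hged : g i ∈ ed := by
        rw [hedeq]
        exact Finset.mem_filter.2 ⟨Finset.mem_univ _, hib⟩
      have : g i ∈ T' ∪ W := by
        rw [← heq]
        exact Finset.mem_inter.2 ⟨hgT i, hged⟩
      rcases Finset.mem_union.1 this with h | h
      · exfalso
        obtain ⟨i', hi', hgi'⟩ := Finset.mem_image.1 h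
        have : i' = i := hginj hgi'
        rw [this] at hi'
        have := (Finset.mem_filter.1 hi').2
        rw [hji] at this
        exact hp this
      · exact h
  choose ip hip using hC
  -- counting
  have hcount : (Finset.univ.filter (fun p : Fin (t+1) => p ≠ 0)).card ≤ W.card := by
    refine Finset.card_le_card_of_injOn (fun p => g (ip p)) (fun p hp => ?_) ?_
    · exact (hip p (Finset.mem_filter.1 hp).2).2
    · intro p hp q hq hpq
      have h1 := (hip p (Finset.mem_filter.1 hp).2).1
      have h2 := (hip q (Finset.mem_filter.1 hq).2).1
      have : ip p = ip q := hginj hpq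
      rw [← h1, ← h2, this]
  have hcard : (Finset.univ.filter (fun p : Fin (t+1) => p ≠ 0)).card = t := by
    rw [Finset.filter_ne', Finset.card_erase_of_mem (Finset.mem_univ _),
      Finset.card_univ, Fintype.card_fin]
    omega
  rw [hcard] at hcount
  omega
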